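/- The skew-symmetric tensor T = e_1 \wedge e_2 \wedge e_3 \in C^3 \otimes C^3 \otimes C^3 does not restrict to the tensor M_{1,1,3} = \sum_{k=1}^3 e_1 \otimes e_k \otimes e_k: there are no linear maps A: C^3 \to C, B: C^3 \to C^3, C: C^3 \to C^3 with (A \otimes B \otimes C) T = M_{1,1,3}. -/
import Mathlib


open scoped BigOperators

/-- Contraction of the first index of a 3-tensor with a covector, giving a matrix. -/
noncomputable def contr1 {ι₁ ι₂ ι₃ : Type*} [Fintype ι₁]
    (β : ι₁ → ℂ) (T : ι₁ → ι₂ → ι₃ → ℂ) : Matrix ι₂ ι₃ ℂ :=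
  Matrix.of fun j k => ∑ i, β i * T i j k

/-- Contraction of the second index. -/
noncomputable def contr2 {ι₁ ι₂ ι₃ : Type*} [Fintype ι₂]
    (γ : ι₂ → ℂ) (T : ι₁ → ι₂ → ι₃ → ℂ) : Matrix ι₁ ι₃ ℂ :=
  Matrix.of fun i k => ∑ j, γ j * T i j k

/-- Contraction of the third index. -/
noncomputable def contr3 {ι₁ ι₂ ι₃ : Type*} [Fintype ι₃]
    (δ : ι₃ → ℂ) (T : ι₁ → ι₂ → ι₃ → ℂ) : Matrix ι₁ ι₂ ℂ :=
  Matrix.of fun i j => ∑ k, δ k * T i j k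

/-- Restriction `(A ⊗ B ⊗ C) T` of a 3-tensor. -/
noncomputable def restrict {ι₁ ι₂ ι₃ κ₁ κ₂ κ₃ : Type*}
    [Fintype ι₁] [Fintype ι₂] [Fintype ι₃]
    (A : Matrix κ₁ ι₁ ℂ) (B : Matrix κ₂ ι₂ ℂ) (C : Matrix κ₃ ι₃ ℂ)
    (T : ι₁ → ι₂ → ι₃ → ℂ) : κ₁ → κ₂ → κ₃ → ℂ :=
  fun x y z => ∑ i, ∑ j, ∑ k, A x i * B y j * C z k * T i j k

/-- The polynomial multiplication tensor `P_{a,b}` (zero-based indices). -/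
noncomputable def polyMul (a b : ℕ) : Fin a → Fin b → Fin (a + b - 1) → ℂ :=
  fun i j k => if (k : ℕ) = (i : ℕ) + (j : ℕ) then 1 else 0

/-- The unit tensor `⟨r⟩`. -/
noncomputable def unitTensor (r : ℕ) : Fin r → Fin r → Fin r → ℂ :=
  fun i j k => if i = j ∧ j = k then 1 else 0

/-- The matrix multiplication tensor `M_n`. -/
noncomputable def MM (n : ℕ) :
    (Fin n × Fin n) → (Fin n × Fin n) → (Fin n × Fin n) → ℂ :=
  fun p q r => if p.2 = q.1 ∧ q.2 = r.1 ∧ r.2 = p.1 then 1 else 0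

/-- Minrank of a 3-tensor (w.r.t. first-index slices). -/
noncomputable def minrank {a b c : ℕ} (T : Fin a → Fin b → Fin c → ℂ) : ℕ :=
  sInf {r | ∃ β : Fin a → ℂ, contr1 β T ≠ 0 ∧ (contr1 β T).rank = r}

/-- A tensor is concise if all three flattenings are injective, i.e. all nonzero
contractions are nonzero matrices. -/
def Concise {a b c : ℕ} (T : Fin a → Fin b → Fin c → ℂ) : Prop :=
  (∀ β : Fin a → ℂ, β ≠ 0 → contr1 β T ≠ 0) ∧
  (∀ γ : Fin b → ℂ, γ ≠ 0 → contr2 γ T ≠ 0) ∧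
  (∀ δ : Fin c → ℂ, δ ≠ 0 → contr3 δ T ≠ 0)

/-- Gram matrix of the first flattening, `T₁^* T₁`. -/
noncomputable def gram1 {ι₁ ι₂ ι₃ : Type*} [Fintype ι₂] [Fintype ι₃]
    (T : ι₁ → ι₂ → ι₃ → ℂ) : Matrix ι₁ ι₁ ℂ :=
  Matrix.of fun i i' => ∑ j, ∑ k, (starRingEnd ℂ) (T i j k) * T i' j k

/-- Gram matrix of the second flattening. -/
noncomputable def gram2 {ι₁ ι₂ ι₃ : Type*} [Fintype ι₁] [Fintype ι₃]
    (T : ι₁ → ι₂ → ι₃ → ℂ) : Matrix ι₂ ι₂ ℂ :=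
  Matrix.of fun j j' => ∑ i, ∑ k, (starRingEnd ℂ) (T i j k) * T i j' k

/-- Gram matrix of the third flattening. -/
noncomputable def gram3 {ι₁ ι₂ ι₃ : Type*} [Fintype ι₁] [Fintype ι₂]
    (T : ι₁ → ι₂ → ι₃ → ℂ) : Matrix ι₃ ι₃ ℂ :=
  Matrix.of fun k k' => ∑ i, ∑ j, (starRingEnd ℂ) (T i j k) * T i j k'

/-- The tensor `M_{a,1,b}`. -/
noncomputable def Mab (a b : ℕ) : Fin a → Fin b → (Fin b × Fin a) → ℂ :=
  fun i k p => if p = (k, i) then 1 else 0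

/-- The antisymmetric tensor `e₁ ∧ e₂ ∧ e₃`. -/
noncomputable def wedge : Fin 3 → Fin 3 → Fin 3 → ℂ :=
  fun i j k => ∑ σ : Equiv.Perm (Fin 3),
    ((Equiv.Perm.sign σ : ℤ) : ℂ) * (if i = σ 0 ∧ j = σ 1 ∧ k = σ 2 then 1 else 0)

/-- The iterated matrix multiplication tensor of order `k`. -/
noncomputable def IMM (n k : ℕ) : (Fin k → Fin n × Fin n) → ℂ :=
  fun x => ∑ i : Fin k → Fin n, if ∀ ℓ : Fin k, x ℓ = (i ℓ, i ⟨((ℓ : ℕ) + 1) % k, Nat.mod_lt _ ℓ.pos⟩) then 1 else 0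

/-- Restriction of an order-`k` tensor by applying a linear map to each factor. -/
noncomputable def restrictK {k : ℕ} {ι κ : Fin k → Type*} [∀ ℓ, Fintype (ι ℓ)]
    (A : ∀ ℓ, Matrix (κ ℓ) (ι ℓ) ℂ) (T : (∀ ℓ, ι ℓ) → ℂ) : (∀ ℓ, κ ℓ) → ℂ :=
  fun x => ∑ y : ∀ ℓ, ι ℓ, (∏ ℓ, A ℓ (x ℓ) (y ℓ)) * T y


lemma wedge_skew (i j k : Fin 3) : wedge i k j = - wedge i j k := by
  unfold wedge
  rw [← Finset.sum_neg_distrib]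
  apply Fintype.sum_equiv (Equiv.mulRight (Equiv.swap 1 2))
  intro σ
  simp only [Equiv.coe_mulRight, Equiv.Perm.mul_apply]
  rw [Equiv.Perm.sign_mul]
  have h0 : Equiv.swap (1 : Fin 3) 2 0 = 0 := by decide
  have h1 : Equiv.swap (1 : Fin 3) 2 1 = 2 := by decide
  have h2 : Equiv.swap (1 : Fin 3) 2 2 = 1 := by decide
  have hs : Equiv.Perm.sign (Equiv.swap (1 : Fin 3) 2) = -1 := by decide
  simp only [h0, h1, h2, hs]
  push_cast
  by_cases h : i = σ 0 ∧ k = σ 1 ∧ j = σ 2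
  · rw [if_pos h, if_pos ⟨h.1, h.2.2, h.2.1⟩]; ring
  · rw [if_neg h, if_neg (by tauto)]; ring

lemma contr1_wedge_det (β : Fin 3 → ℂ) : (contr1 β wedge).det = 0 := by
  have hskew : Matrix.transpose (contr1 β wedge) = - contr1 β wedge := by
    ext j k
    simp only [Matrix.transpose_apply, Matrix.neg_apply, contr1, Matrix.of_apply]
    rw [← Finset.sum_neg_distrib]
    refine Finset.sum_congr rfl fun i _ => ?_
    rw [wedge_skew]
    ring
  have h1 : (contr1 β wedge).det = (- contr1 β wedge).det := by
    rw [← hskew, Matrix.det_transpose]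
  rw [Matrix.det_neg] at h1
  simp only [Fintype.card_fin] at h1
  norm_num at h1
  have h2 : (2 : ℂ) * (contr1 β wedge).det = 0 := by linear_combination h1
  exact (mul_eq_zero.mp h2).resolve_left two_ne_zero

/-- `e₁ ∧ e₂ ∧ e₃` does not restrict to `M_{1,1,3}`. -/
theorem wedge_not_restrict_M113 :
    ¬ ∃ (A : Matrix (Fin 1) (Fin 3) ℂ) (B : Matrix (Fin 3) (Fin 3) ℂ)
        (C : Matrix (Fin 3) (Fin 3) ℂ),
        restrict A B C wedge
          = fun (_ : Fin 1) (j k : Fin 3) => if j = k then (1 : ℂ) else 0 := by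
  rintro ⟨A, B, C, h⟩
  have hM : B * contr1 (A 0) wedge * Matrix.transpose C = 1 := by
    ext j k
    have hjk := congrFun (congrFun (congrFun h 0) j) k
    simp only [restrict] at hjk
    simp only [Matrix.mul_apply, Matrix.transpose_apply, Matrix.one_apply, contr1,
      Matrix.of_apply]
    rw [← hjk]
    simp only [Fin.sum_univ_three]
    ring
  have hdet : (B * contr1 (A 0) wedge * Matrix.transpose C).det = 1 := by
    rw [hM, Matrix.det_one]
  rw [Matrix.det_mul, Matrix.det_mul, contr1_wedge_det] at hdet
  simp at hdet
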